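/- Let τ > 0, σ > 1, h > 0, and T_{τ,σ,h}(k) = sup_{p∈ℕ} ln⁺(h^{p^σ} k^p / p^{τ p^σ}). Then for every t > 0 there exists a constant C > 0 such that T_{τ,σ,1}(k) < C·k^{1/t} for all k > 0. In particular e^{T_{τ,σ,h}(k)} grows slower at infinity than every subexponential function e^{Ck^{1/t}}. -/

import Mathlib

open Real

/-- The extended associated function
`T_{τ,σ,h}(k) = sup_{p∈ℕ} ln⁺(h^{p^σ} k^p / p^{τ p^σ})`. -/
noncomputable def Tassoc (τ σ h k : ℝ) : ℝ :=
  ⨆ p : ℕ, max 0 (Real.log (h ^ ((p : ℝ) ^ σ) * k ^ p / (p : ℝ) ^ (τ * (p : ℝ) ^ σ)))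

/-- Young-type inequality: `x*y ≤ c x^σ + A y^(σ/(σ-1))`. -/
lemma aux_young {σ c x y : ℝ} (hσ : 1 < σ) (hc : 0 < c) (hx : 0 ≤ x) (hy : 0 ≤ y) :
    x * y ≤ c * x ^ σ +
      (1 / (c * σ) ^ (1/σ)) ^ (σ/(σ-1)) / (σ/(σ-1)) * y ^ (σ/(σ-1)) := by
  have hσ0 : (0:ℝ) < σ := lt_trans one_pos hσ
  have hσ1 : (0:ℝ) < σ - 1 := sub_pos.2 hσ
  have hq : σ.HolderConjugate (σ/(σ-1)) := (Real.holderConjugate_iff_eq_conjExponent hσ).2 rfl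
  have hcσ : 0 < c * σ := mul_pos hc hσ0
  set D : ℝ := (c * σ) ^ (1/σ) with hD
  have hD0 : 0 < D := Real.rpow_pos_of_pos hcσ _
  have key := Real.young_inequality_of_nonneg (mul_nonneg hD0.le hx)
    (div_nonneg hy hD0.le) hq
  have h1 : (D * x) * (y / D) = x * y := by field_simp
  have h2 : (D * x) ^ σ = (c * σ) * x ^ σ := by
    rw [Real.mul_rpow hD0.le hx, hD, ← Real.rpow_mul hcσ.le,
      one_div_mul_cancel hσ0.ne', Real.rpow_one]
  have h3 : (y / D) ^ (σ/(σ-1)) = y ^ (σ/(σ-1)) * (1/D) ^ (σ/(σ-1)) := by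
    rw [Real.div_rpow hy hD0.le, Real.div_rpow (by norm_num) hD0.le, Real.one_rpow]
    ring
  rw [h1, h2, h3] at key
  have h4 : (c * σ) * x ^ σ / σ = c * x ^ σ := by field_simp
  rw [h4] at key
  calc x * y ≤ c * x ^ σ + y ^ (σ/(σ-1)) * (1/D) ^ (σ/(σ-1)) / (σ/(σ-1)) := key
    _ = c * x ^ σ + (1/D) ^ (σ/(σ-1)) / (σ/(σ-1)) * y ^ (σ/(σ-1)) := by ring

theorem stmt12 (τ σ : ℝ) (hτ : 0 < τ) (hσ : 1 < σ) :
    ∀ t : ℝ, 0 < t → ∃ C > (0 : ℝ), ∀ k : ℝ, 0 < k →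
      Tassoc τ σ 1 k < C * k ^ (1 / t) := by
  intro t ht
  have hσ0 : (0:ℝ) < σ := lt_trans one_pos hσ
  have hσ1 : (0:ℝ) < σ - 1 := sub_pos.2 hσ
  set q : ℝ := σ / (σ - 1) with hqdef
  have hq0 : 0 < q := div_pos hσ0 hσ1
  have hq1 : 1 ≤ q := by rw [hqdef, le_div_iff₀ hσ1]; linarith
  set c : ℝ := τ * Real.log 2 with hcdef
  have hc0 : 0 < c := mul_pos hτ (Real.log_pos one_lt_two)
  set A : ℝ := (1 / (c * σ) ^ (1/σ)) ^ q / q with hAdef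
  have hA0 : 0 ≤ A := by
    apply div_nonneg _ hq0.le
    exact Real.rpow_nonneg (by positivity) q
  set ε : ℝ := 1 / (t * q) with hεdef
  have hε0 : 0 < ε := by rw [hεdef]; positivity
  set S : ℝ := 1/ε + A * (1/ε) ^ q with hSdef
  have hS0 : 0 ≤ S := by
    rw [hSdef]
    have : 0 ≤ A * (1/ε) ^ q := mul_nonneg hA0 (Real.rpow_nonneg (by positivity) q)
    have h1ε : 0 ≤ 1/ε := by positivity
    linarith
  refine ⟨S + 1, by linarith, ?_⟩
  intro k hk
  have hkt : 0 < k ^ (1/t) := Real.rpow_pos_of_pos hk _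
  have hεq : ε * q = 1/t := by rw [hεdef]; field_simp
  set L : ℝ := max (Real.log k) 0 with hLdef
  have hL0 : 0 ≤ L := le_max_right _ _
  have hLε : L ≤ (1/ε) * k ^ ε := by
    apply max_le _ (by positivity)
    have := Real.log_le_rpow_div hk.le hε0
    calc Real.log k ≤ k ^ ε / ε := this
      _ = (1/ε) * k ^ ε := by ring
  have hLq : L ^ q ≤ (1/ε) ^ q * k ^ (1/t) := by
    calc L ^ q ≤ ((1/ε) * k ^ ε) ^ q := Real.rpow_le_rpow hL0 hLε hq0.le
      _ = (1/ε) ^ q * (k ^ ε) ^ q := Real.mul_rpow (by positivity) (by positivity)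
      _ = (1/ε) ^ q * k ^ (1/t) := by rw [← Real.rpow_mul hk.le, hεq]
  have key : Tassoc τ σ 1 k ≤ S * k ^ (1/t) := by
    rw [Tassoc]
    apply ciSup_le
    intro p
    apply max_le (by positivity)
    rcases Nat.eq_zero_or_pos p with hp | hp
    · subst hp
      simp only [Nat.cast_zero, Real.one_rpow, pow_zero, one_mul,
        Real.zero_rpow hσ0.ne', mul_zero, Real.rpow_zero, div_one, Real.log_one]
      positivity
    · have hP1 : (1:ℝ) ≤ (p:ℝ) := Nat.one_le_cast.2 hp
      have hP0 : (0:ℝ) < (p:ℝ) := lt_of_lt_of_le one_pos hP1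
      rw [Real.one_rpow, one_mul,
        Real.log_div (by positivity) (Real.rpow_pos_of_pos hP0 _).ne',
        Real.log_pow, Real.log_rpow hP0]
      rcases eq_or_lt_of_le (show 1 ≤ p from hp) with hp1 | hp2
      · -- p = 1
        have hp1' : p = 1 := hp1.symm
        subst hp1'
        simp only [Nat.cast_one, one_mul, Real.log_one, mul_zero, sub_zero]
        rcases le_or_gt k 1 with hk1 | hk1
        · have : Real.log k ≤ 0 := Real.log_nonpos hk.le hk1
          have : 0 ≤ S * k ^ (1/t) := mul_nonneg hS0 hkt.le
          linarith
        · have hεle : ε ≤ 1/t := by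
            rw [hεdef]
            apply one_div_le_one_div_of_le ht
            exact le_mul_of_one_le_right ht.le hq1
          have hke : k ^ ε ≤ k ^ (1/t) :=
            Real.rpow_le_rpow_of_exponent_le hk1.le hεle
          have h1 : Real.log k ≤ L := le_max_left _ _
          have h2 : (1/ε) * k ^ ε ≤ (1/ε) * k ^ (1/t) :=
            mul_le_mul_of_nonneg_left hke (by positivity)
          have h3 : 0 ≤ A * ((1/ε) ^ q * k ^ (1/t)) := by positivity
          rw [hSdef]; linarith [h1, hLε, h2, h3]
      · -- p ≥ 2
        have h2P : (2:ℝ) ≤ (p:ℝ) := by exact_mod_cast hp2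
        have hlogP : Real.log 2 ≤ Real.log p := Real.log_le_log (by norm_num) h2P
        have hPσ : (0:ℝ) ≤ (p:ℝ) ^ σ := Real.rpow_nonneg hP0.le _
        have hyoung := aux_young hσ hc0 hP0.le hL0
        rw [← hqdef, ← hAdef] at hyoung
        have h4 : (p:ℝ) * Real.log k ≤ (p:ℝ) * L :=
          mul_le_mul_of_nonneg_left (le_max_left _ _) hP0.le
        have h5 : c * (p:ℝ) ^ σ ≤ τ * (p:ℝ) ^ σ * Real.log p := by
          have := mul_le_mul_of_nonneg_left hlogP (mul_nonneg hτ.le hPσ)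
          rw [hcdef]; nlinarith
        have h6 : A * L ^ q ≤ A * ((1/ε) ^ q * k ^ (1/t)) :=
          mul_le_mul_of_nonneg_left hLq hA0
        have h7 : 0 ≤ (1/ε) * k ^ (1/t) := by positivity
        rw [hSdef]; linarith [h4, hyoung, h5, h6, h7]
  calc Tassoc τ σ 1 k ≤ S * k ^ (1/t) := key
    _ < (S + 1) * k ^ (1/t) := by linarith [hkt]
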